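/- Let (G, col) be a pushdown parity game with coloring col : Q → [n], let wv be a finite path in G starting at a configuration of stack height 0 (w a nonempty finite path, v a single configuration), and let c, c' ∈ [n]. If StairSc_c(wv) = StairSc_c(w) + 1 and StairSc_{c'}(wv) = StairSc_{c'}(w) + 1, then c = c'. In other words, at most one stair-scoring function is increased in any round. -/

import Mathlib

namespace FDGames


/-- A game graph: ownership partition, edge relation, initial vertex, and
every vertex has at least one successor. -/
structure GameGraph (V : Type*) where
  own : V → Fin 2
  E : V → V → Prop
  vin : V
  succ : ∀ v, ∃ v', E v v'

/-- An infinite play: starts at the initial vertex and follows edges. -/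
def IsPlay {V : Type*} (G : GameGraph V) (ρ : ℕ → V) : Prop :=
  ρ 0 = G.vin ∧ ∀ m, G.E (ρ m) (ρ (m + 1))

/-- A play consistent with the strategy `σ` of Player `i`; the strategy gets the
history (the vertices strictly before the current one) and the current vertex. -/
def ConsistentPlay {V : Type*} (G : GameGraph V) (i : Fin 2)
    (σ : List V → V → V) (ρ : ℕ → V) : Prop :=
  IsPlay G ρ ∧ ∀ m, G.own (ρ m) = i → ρ (m + 1) = σ ((List.range m).map ρ) (ρ m)

/-- The minimal color seen infinitely often along `ρ`. -/
noncomputable def minInfCol {V : Type*} (col : V → ℕ) (ρ : ℕ → V) : ℕ :=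
  sInf {c | ∀ N, ∃ m, N ≤ m ∧ col (ρ m) = c}

/-- The play `ρ` is winning for Player `i` in the (min-) parity game. -/
def WinningPlay {V : Type*} (col : V → ℕ) (i : Fin 2) (ρ : ℕ → V) : Prop :=
  minInfCol col ρ % 2 = (i : ℕ)

/-- A (legal) strategy always moves along edges. -/
def IsStrategy {V : Type*} (G : GameGraph V) (σ : List V → V → V) : Prop :=
  ∀ h v, G.E v (σ h v)

/-- A positional strategy only depends on the current vertex. -/
def Positional {V : Type*} (σ : List V → V → V) : Prop :=
  ∀ h h' v, σ h v = σ h' v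

/-- A winning strategy for Player `i` in the parity game `(G, col)`. -/
def WinningStrategy {V : Type*} (G : GameGraph V) (col : V → ℕ) (i : Fin 2)
    (σ : List V → V → V) : Prop :=
  IsStrategy G σ ∧ ∀ ρ, ConsistentPlay G i σ ρ → WinningPlay col i ρ

/-- Player `i` wins the parity game `(G, col)`. -/
def WinsGame {V : Type*} (G : GameGraph V) (col : V → ℕ) (i : Fin 2) : Prop :=
  ∃ σ, WinningStrategy G col i σ

/-- A pushdown system.  The bottom-of-stack symbol `⊥` is kept implicit: a stack
content is the list of symbols from `Γ` strictly above `⊥` (top = head), and the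
top-of-stack symbol read by a transition is an `Option Γ` (`none` = `⊥`).  Since
`⊥` can neither be written nor deleted, a transition reading a symbol of `Γ`
rewrites it to at most two symbols of `Γ`, and a transition reading `⊥` writes at
most one symbol of `Γ` above `⊥`.  The system is deadlock-free. -/
structure PDS (Q Γ : Type*) where
  qin : Q
  Δ : Set (Q × Option Γ × Q × List Γ)
  bound2 : ∀ q A p α, (q, A, p, α) ∈ Δ → α.length ≤ 2
  bound1 : ∀ q p α, (q, (none : Option Γ), p, α) ∈ Δ → α.length ≤ 1
  df : ∀ q A, ∃ q' α, (q, A, q', α) ∈ Δ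

/-- Configurations: a state together with the stack content above `⊥`. -/
abbrev Config (Q Γ : Type*) := Q × List Γ

/-- The stack height of a configuration. -/
def confSh {Q Γ : Type*} (v : Config Q Γ) : ℕ := v.2.length

/-- One step of the pushdown system between configurations. -/
def PDS.step {Q Γ : Type*} (P : PDS Q Γ) (u v : Config Q Γ) : Prop :=
  (u.2 = [] ∧ (u.1, (none : Option Γ), v.1, v.2) ∈ P.Δ) ∨
  (∃ a rest α, u.2 = a :: rest ∧ (u.1, some a, v.1, α) ∈ P.Δ ∧ v.2 = α ++ rest)

/-- The pushdown game graph induced by a PDS and a partition of its states. -/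
def PDS.graph {Q Γ : Type*} (P : PDS Q Γ) (own : Q → Fin 2) :
    GameGraph (Config Q Γ) where
  own := fun v => own v.1
  E := P.step
  vin := (P.qin, [])
  succ := by
    rintro ⟨q, _ | ⟨a, rest⟩⟩
    · obtain ⟨q', α, h⟩ := P.df q none
      exact ⟨(q', α), Or.inl ⟨rfl, h⟩⟩
    · obtain ⟨q', α, h⟩ := P.df q (some a)
      exact ⟨(q', α ++ rest), Or.inr ⟨a, rest, α, rfl, h, rfl⟩⟩

/-- The stair positions of a sequence of stack heights. -/
def stairPositions (hs : List ℕ) : Finset ℕ :=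
  (Finset.range hs.length).filter fun m =>
    ∀ m' < hs.length, m ≤ m' → hs.getD m 0 ≤ hs.getD m' 0

/-- For a word of (color, stack height) pairs, the position where `lastBump`
starts, i.e. `l + 1` for the second largest stair position `l` (and `0` if there
is no such position). -/
def bumpStart (w : List (ℕ × ℕ)) : ℕ :=
  ((Finset.range (w.length - 1)).filter
    fun l => (w.getD l (0, 0)).2 ≤ ((w.getLast?).getD (0, 0)).2).sup (· + 1)

theorem bumpStart_lt {w : List (ℕ × ℕ)} (h : w ≠ []) : bumpStart w < w.length := by
  have h1 : 0 < w.length := List.length_pos_iff.mpr h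
  have h2 : bumpStart w ≤ w.length - 1 := by
    apply Finset.sup_le
    intro l hl
    have := Finset.mem_range.mp (Finset.mem_filter.mp hl).1
    omega
  omega

/-- The minimal color occurring in a word of (color, stack height) pairs. -/
def minColList (w : List (ℕ × ℕ)) : ℕ := ((w.map Prod.fst).minimum).getD 0

/-- The stair-scoring function `StairSc_c`, on words of (color, stack height)
pairs.  `w.take (bumpStart w)` is `Reset(w)` and `w.drop (bumpStart w)` is
`lastBump(w)`. -/
def StairSc (c : ℕ) (w : List (ℕ × ℕ)) : ℕ :=
  if h : w = [] then 0
  else if c < minColList (w.drop (bumpStart w)) then StairSc c (w.take (bumpStart w))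
  else if minColList (w.drop (bumpStart w)) = c then StairSc c (w.take (bumpStart w)) + 1
  else 0
termination_by w.length
decreasing_by
  all_goals
    have hlt := bumpStart_lt h
    simp only [List.length_take]
    omega

/-- Maximum of `StairSc_c` over all prefixes. -/
def MaxStairSc (c : ℕ) (w : List (ℕ × ℕ)) : ℕ :=
  (Finset.range (w.length + 1)).sup fun m => StairSc c (w.take m)

/-- The word of (color, stack height) pairs associated to a path of
configurations. -/
def toCH {Q Γ : Type*} (col : Q → ℕ) (w : List (Config Q Γ)) : List (ℕ × ℕ) :=
  w.map fun v => (col v.1, v.2.length)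

lemma aux_getD_append {w : List (ℕ × ℕ)} {x : ℕ × ℕ} {j : ℕ} (h : j < w.length) :
    (w ++ [x]).getD j (0, 0) = w.getD j (0, 0) := by
  simp [List.getD_eq_getElem?_getD, List.getElem?_append_left h]

lemma aux_getD_take {w : List (ℕ × ℕ)} {n j : ℕ} (h : j < n) :
    (w.take n).getD j (0, 0) = w.getD j (0, 0) := by
  simp [List.getD_eq_getElem?_getD, List.getElem?_take, h]

lemma aux_getLast?_getD {w : List (ℕ × ℕ)} :
    (w.getLast?).getD (0, 0) = w.getD (w.length - 1) (0, 0) := by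
  rw [List.getLast?_eq_getElem?, List.getD_eq_getElem?_getD]

lemma aux_le_bumpStart {w : List (ℕ × ℕ)} {l : ℕ} (hl : l < w.length - 1)
    (hh : (w.getD l (0, 0)).2 ≤ ((w.getLast?).getD (0, 0)).2) :
    l + 1 ≤ bumpStart w :=
  Finset.le_sup (f := (· + 1)) (Finset.mem_filter.mpr ⟨Finset.mem_range.mpr hl, hh⟩)

lemma aux_bumpStart_mem {w : List (ℕ × ℕ)} (h : 0 < bumpStart w) :
    bumpStart w - 1 < w.length - 1 ∧
    (w.getD (bumpStart w - 1) (0, 0)).2 ≤ ((w.getLast?).getD (0, 0)).2 := by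
  set S := (Finset.range (w.length - 1)).filter
      (fun l => (w.getD l (0, 0)).2 ≤ ((w.getLast?).getD (0, 0)).2) with hS
  rcases S.eq_empty_or_nonempty with he | hne
  · exfalso
    have : bumpStart w = 0 := by rw [bumpStart, ← hS, he]; simp
    omega
  · obtain ⟨l, hl, hsup⟩ := Finset.exists_mem_eq_sup S hne (· + 1)
    have hb : bumpStart w = l + 1 := by rw [bumpStart, ← hS]; exact hsup
    have hl' := Finset.mem_filter.mp hl
    rw [hb]
    simp only [Nat.add_sub_cancel]
    exact ⟨Finset.mem_range.mp hl'.1, hl'.2⟩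

lemma aux_lt_minColList {u : List (ℕ × ℕ)} {c : ℕ} (h : c < minColList u)
    {x : ℕ × ℕ} (hx : x ∈ u) : c < x.1 := by
  have hx1 : x.1 ∈ u.map Prod.fst := List.mem_map_of_mem hx
  have hne : (u.map Prod.fst).minimum ≠ ⊤ := by
    simp only [ne_eq, List.minimum_eq_top]
    intro he; rw [he] at hx1; simp at hx1
  obtain ⟨m, hm⟩ := WithTop.ne_top_iff_exists.mp hne
  have hle := List.minimum_le_of_mem hx1 hm.symm
  have hmc : minColList u = m := by rw [minColList, ← hm]; rfl
  omega

lemma aux_minColList_gt {u : List (ℕ × ℕ)} (hne : u ≠ []) {c : ℕ}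
    (h : ∀ x ∈ u, c < x.1) : c < minColList u := by
  have hm : (u.map Prod.fst).minimum ≠ ⊤ := by
    simp only [ne_eq, List.minimum_eq_top]; simp [hne]
  obtain ⟨m, hm⟩ := WithTop.ne_top_iff_exists.mp hm
  have hmem := List.minimum_mem hm.symm
  obtain ⟨x, hx, hxm⟩ := List.mem_map.mp hmem
  have hmc : minColList u = m := by rw [minColList, ← hm]; rfl
  rw [hmc, ← hxm]; exact h x hx

lemma aux_score_reset (c : ℕ) (w : List (ℕ × ℕ)) (b : ℕ) (hb : 0 < b)
    (hbw : b < w.length)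
    (hst : ∀ j, b - 1 ≤ j → j < w.length →
      (w.getD (b - 1) (0, 0)).2 ≤ (w.getD j (0, 0)).2)
    (hcl : ∀ j, b ≤ j → j < w.length → c < (w.getD j (0, 0)).1) :
    StairSc c w = StairSc c (w.take b) := by
  have hne : w ≠ [] := by
    intro h; rw [h] at hbw; simp at hbw
  have hb'lt : bumpStart w < w.length := bumpStart_lt hne
  set b' := bumpStart w with hb'
  have hbb' : b ≤ b' := by
    have h2 : (w.getD (b - 1) (0, 0)).2 ≤ ((w.getLast?).getD (0, 0)).2 := by
      rw [aux_getLast?_getD]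
      exact hst (w.length - 1) (by omega) (by omega)
    have := aux_le_bumpStart (by omega : b - 1 < w.length - 1) h2
    omega
  have hmin : c < minColList (w.drop b') := by
    apply aux_minColList_gt
    · intro h
      apply_fun List.length at h
      simp at h; omega
    · intro x hx
      obtain ⟨i, hi, hix⟩ := List.mem_iff_getElem.mp hx
      have hlen : b' + i < w.length := by
        simp only [List.length_drop] at hi; omega
      have hxe : x = w.getD (b' + i) (0, 0) := by
        rw [List.getD_eq_getElem (hn := hlen), ← List.getElem_drop (h := hi), hix]
      rw [hxe]
      exact hcl (b' + i) (by omega) hlen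
  rw [StairSc, dif_neg hne, if_pos hmin]
  rcases eq_or_lt_of_le hbb' with heq | hlt
  · rw [heq]
  · have hlen' : (w.take b').length = b' := by
      simp [List.length_take]; omega
    have hrec := aux_score_reset c (w.take b') b hb (by omega)
      (by
        intro j hj1 hj2
        rw [hlen'] at hj2
        rw [aux_getD_take (by omega : b - 1 < b'), aux_getD_take hj2]
        exact hst j hj1 (by omega))
      (by
        intro j hj1 hj2
        rw [hlen'] at hj2
        rw [aux_getD_take hj2]
        exact hcl j hj1 (by omega))
    have htt : (w.take b').take b = w.take b := by
      rw [List.take_take, min_eq_left (le_of_lt hlt)]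
    rw [hrec, htt]
termination_by w.length
decreasing_by
  simp only [List.length_take]
  omega

lemma aux_stairsc_nil (c : ℕ) : StairSc c [] = 0 := by
  rw [StairSc]; simp

lemma aux_key {c : ℕ} {w : List (ℕ × ℕ)} (hw : w ≠ []) (x : ℕ × ℕ)
    (h : StairSc c (w ++ [x]) = StairSc c w + 1) :
    minColList ((w ++ [x]).drop (bumpStart (w ++ [x]))) = c := by
  set u := w ++ [x] with hu
  have hune : u ≠ [] := by simp [hu]
  set b := bumpStart u with hb
  have hblt : b < u.length := bumpStart_lt hune
  have hulen : u.length = w.length + 1 := by simp [hu]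
  have hlast : ((u.getLast?).getD (0, 0)).2 = x.2 := by
    rw [hu, List.getLast?_concat]; rfl
  rcases lt_trichotomy c (minColList (u.drop b)) with hlt | heq | hgt
  · exfalso
    rw [StairSc, dif_neg hune, ← hb, if_pos hlt] at h
    rcases Nat.eq_zero_or_pos b with hb0 | hbpos
    · rw [hb0, List.take_zero, aux_stairsc_nil] at h; omega
    · have hble : b ≤ w.length := by omega
      rcases eq_or_lt_of_le hble with hbeq | hblt'
      · rw [hu, hbeq] at h
        rw [List.take_left] at h
        omega
      · have htake : u.take b = w.take b := by
          rw [hu, List.take_append_of_le_length hble]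
        obtain ⟨hm1, hm2⟩ := aux_bumpStart_mem (w := u) hbpos
        rw [hlast] at hm2
        have hgd : u.getD (b - 1) (0, 0) = w.getD (b - 1) (0, 0) := by
          rw [hu]; exact aux_getD_append (by omega)
        rw [hgd] at hm2
        have hstair : ∀ j, b - 1 ≤ j → j < w.length →
            (w.getD (b - 1) (0, 0)).2 ≤ (w.getD j (0, 0)).2 := by
          intro j hj1 hj2
          rcases eq_or_lt_of_le hj1 with heq' | hj3
          · rw [← heq']
          · by_cases hxj : (w.getD j (0, 0)).2 ≤ x.2
            · have hju : (u.getD j (0, 0)).2 ≤ ((u.getLast?).getD (0, 0)).2 := by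
                rw [hlast, hu, aux_getD_append hj2]; exact hxj
              have := aux_le_bumpStart (w := u) (by omega : j < u.length - 1) hju
              omega
            · omega
        have hcols : ∀ j, b ≤ j → j < w.length → c < (w.getD j (0, 0)).1 := by
          intro j hj1 hj2
          have hjlen : j < u.length := by omega
          have hdlen : j - b < (u.drop b).length := by
            simp only [List.length_drop]; omega
          have hmem : u.getD j (0, 0) ∈ u.drop b := by
            have he : (u.drop b)[j - b] = u.getD j (0, 0) := by
              rw [List.getElem_drop, List.getD_eq_getElem (hn := by omega)]
              congr 1
              omega
            rw [← he]
            exact List.getElem_mem hdlen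
          have := aux_lt_minColList hlt hmem
          rw [hu, aux_getD_append hj2] at this
          exact this
        have := aux_score_reset c w b hbpos hblt' hstair hcols
        rw [htake] at h
        omega
  · exact heq.symm
  · exfalso
    rw [StairSc, dif_neg hune, ← hb, if_neg (by omega), if_neg (by omega)] at h
    omega

/-- Lemma 4: at most one stair-scoring function is increased in any round. -/
theorem stmt11 {Q Γ : Type*} [Finite Q] [Finite Γ] (P : PDS Q Γ) (n : ℕ)
    (col : Q → ℕ) (hcol : ∀ q, col q < n)
    (w : List (Config Q Γ)) (v : Config Q Γ) (hw : w ≠ [])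
    (hchain : (w ++ [v]).Chain' P.step) (hhead : ∃ q, w.head? = some (q, []))
    (c c' : ℕ) (hc : c < n) (hc' : c' < n)
    (h1 : StairSc c (toCH col (w ++ [v])) = StairSc c (toCH col w) + 1)
    (h2 : StairSc c' (toCH col (w ++ [v])) = StairSc c' (toCH col w) + 1) :
    c = c' := by
  have e : toCH col (w ++ [v]) = toCH col w ++ [(col v.1, v.2.length)] := by
    simp [toCH]
  have hwne : toCH col w ≠ [] := by simp [toCH, hw]
  rw [e] at h1 h2
  have k1 := aux_key hwne _ h1
  have k2 := aux_key hwne _ h2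
  omega

end FDGames
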